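/- Let α be a real number with α/π irrational and let R : ℝ² → ℝ² be the rotation about the origin by angle α. Define the operator F on nonempty compact subsets of ℝ² by F(A) = A ∪ R(A). Then F possesses no strict attractor: there is no nonempty compact set A* ⊆ ℝ² and open set U ⊆ ℝ² with A* ⊆ U such that d_H(Fⁿ(S), A*) → 0 as n → ∞ for every nonempty compact S ⊆ U. -/

import Mathlib

open Filter Metric

/-- **The IFS `{id, irrational rotation}` of the plane has no strict attractor.**
Let `R` be the rotation of the Euclidean plane about the origin by an angle `α` with
`α/π` irrational, and let `F(A) = A ∪ R(A)` on nonempty compact subsets. Then there is no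
nonempty compact `A*` and open `U ⊇ A*` such that `d_H(Fⁿ(S), A*) → 0` for every
nonempty compact `S ⊆ U`. -/
theorem rotation_union_no_strict_attractor
    (α : ℝ) (hα : Irrational (α / Real.pi))
    (R : EuclideanSpace ℝ (Fin 2) → EuclideanSpace ℝ (Fin 2))
    (hR : ∀ p : EuclideanSpace ℝ (Fin 2),
      R p 0 = p 0 * Real.cos α - p 1 * Real.sin α ∧
      R p 1 = p 0 * Real.sin α + p 1 * Real.cos α) :
    ¬ ∃ (A : Set (EuclideanSpace ℝ (Fin 2))) (U : Set (EuclideanSpace ℝ (Fin 2))),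
        A.Nonempty ∧ IsCompact A ∧ IsOpen U ∧ A ⊆ U ∧
        ∀ S : Set (EuclideanSpace ℝ (Fin 2)), S.Nonempty → IsCompact S → S ⊆ U →
          Tendsto (fun n => Metric.hausdorffDist ((fun T => T ∪ R '' T)^[n] S) A)
            atTop (nhds 0) := by
  rintro ⟨A, U, hAne, hAcomp, hUopen, hAU, hconv⟩
  -- R preserves norms
  have hRnorm : ∀ p : EuclideanSpace ℝ (Fin 2), ‖R p‖ = ‖p‖ := by
    intro p
    obtain ⟨h0, h1⟩ := hR p
    rw [EuclideanSpace.norm_eq, EuclideanSpace.norm_eq]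
    congr 1
    simp only [Fin.sum_univ_two, Real.norm_eq_abs, sq_abs, h0, h1]
    nlinarith [Real.sin_sq_add_cos_sq α]
  -- attractor lies on the sphere of radius ‖p‖ for every p ∈ U
  have key : ∀ p : EuclideanSpace ℝ (Fin 2), p ∈ U → ∀ x ∈ A, ‖x‖ = ‖p‖ := by
    intro p hp x hx
    have hsub : ∀ n, (fun T => T ∪ R '' T)^[n] {p} ⊆ sphere (0 : EuclideanSpace ℝ (Fin 2)) ‖p‖ := by
      intro n
      induction n with
      | zero => simp [Set.singleton_subset_iff, mem_sphere_zero_iff_norm]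
      | succ n ih =>
        rw [Function.iterate_succ_apply']
        rintro y (hy | ⟨z, hz, rfl⟩)
        · exact ih hy
        · have := ih hz
          simp only [mem_sphere_zero_iff_norm] at this ⊢
          rw [hRnorm]; exact this
    have hne : ∀ n, ((fun T => T ∪ R '' T)^[n] {p}).Nonempty := by
      intro n
      induction n with
      | zero => simp
      | succ n ih => rw [Function.iterate_succ_apply']; exact ih.inl
    have hlim := hconv {p} (Set.singleton_nonempty p) isCompact_singleton
      (Set.singleton_subset_iff.2 hp)
    have hsphne : (sphere (0 : EuclideanSpace ℝ (Fin 2)) ‖p‖).Nonempty :=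
      NormedSpace.sphere_nonempty.2 (norm_nonneg p)
    have hID : infDist x (sphere (0 : EuclideanSpace ℝ (Fin 2)) ‖p‖) ≤ 0 := by
      refine ge_of_tendsto' hlim ?_
      intro n
      have hEne : EMetric.hausdorffEdist ((fun T => T ∪ R '' T)^[n] {p}) A ≠ ⊤ :=
        Metric.hausdorffEdist_ne_top_of_nonempty_of_bounded (hne n) hAne
          ((isBounded_sphere).subset (hsub n)) hAcomp.isBounded
      calc infDist x (sphere (0 : EuclideanSpace ℝ (Fin 2)) ‖p‖)
          ≤ infDist x ((fun T => T ∪ R '' T)^[n] {p}) :=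
            infDist_le_infDist_of_subset (hsub n) (hne n)
        _ ≤ hausdorffDist ((fun T => T ∪ R '' T)^[n] {p}) A := by
            rw [hausdorffDist_comm]
            exact infDist_le_hausdorffDist_of_mem hx
              (by rw [EMetric.hausdorffEdist_comm]; exact hEne)
    have hmem : x ∈ sphere (0 : EuclideanSpace ℝ (Fin 2)) ‖p‖ :=
      (isClosed_sphere.mem_iff_infDist_zero hsphne).2 (le_antisymm hID (infDist_nonneg))
    simpa [mem_sphere_zero_iff_norm] using hmem
  -- find two points of U with distinct norms
  obtain ⟨x₀, hx₀⟩ := hAne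
  obtain ⟨ε, hε, hball⟩ := Metric.isOpen_iff.1 hUopen x₀ (hAU hx₀)
  obtain ⟨e, he, hin⟩ : ∃ e : EuclideanSpace ℝ (Fin 2), ‖e‖ = 1 ∧ 0 ≤ (inner ℝ x₀ e : ℝ) := by
    by_cases h : x₀ = 0
    · refine ⟨EuclideanSpace.single 0 1, ?_, ?_⟩
      · simp [EuclideanSpace.norm_single]
      · simp [h]
    · refine ⟨‖x₀‖⁻¹ • x₀, ?_, ?_⟩
      · rw [norm_smul, norm_inv, norm_norm, inv_mul_cancel₀ (norm_ne_zero_iff.2 h)]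
      · rw [real_inner_smul_right, real_inner_self_eq_norm_sq]
        positivity
  have hmem : ∀ t : ℝ, 0 ≤ t → t < ε → x₀ + t • e ∈ U := by
    intro t ht htε
    apply hball
    simp only [mem_ball, dist_eq_norm, add_sub_cancel_left, norm_smul, he, mul_one,
      Real.norm_eq_abs, abs_of_nonneg ht]
    exact htε
  have hnormsq : ∀ t : ℝ, ‖x₀ + t • e‖ ^ 2 = ‖x₀‖ ^ 2 + 2 * t * (inner ℝ x₀ e : ℝ) + t ^ 2 := by
    intro t
    rw [norm_add_sq_real, real_inner_smul_right, norm_smul, Real.norm_eq_abs, he, mul_one,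
      sq_abs]
    ring
  have h1 : ‖x₀‖ = ‖x₀ + (ε / 4) • e‖ := key _ (hmem (ε / 4) (by linarith) (by linarith)) x₀ hx₀
  have h2 : ‖x₀‖ = ‖x₀ + (ε / 2) • e‖ := key _ (hmem (ε / 2) (by linarith) (by linarith)) x₀ hx₀
  have hq1 := hnormsq (ε / 4)
  have hq2 := hnormsq (ε / 2)
  rw [← h1] at hq1
  rw [← h2] at hq2
  nlinarith [hq1, hq2, hin, hε]
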